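/- Let λ > 0, c > 1 and c̄ = (c+1)/(c−1), and suppose λ/n ≥ c·‖∇Λ(η₀)‖_∞. Let κ > 0 satisfy κ·‖δ_T‖ ≤ ‖√w_i·x_i'δ‖_{2,n} for every δ ∈ Δ_c̄, and let q̄ > 0 satisfy q̄·(1/n)∑_{i=1}^n w_i·|x_i'δ|³ ≤ ((1/n)∑_{i=1}^n w_i·(x_i'δ)²)^{3/2} for every δ ∈ Δ_c̄, with q̄ > 3·(1+1/c)·λ·√s/(n·κ). Then every global minimizer η̂ of η ↦ Λ(η) + (λ/n)·‖η‖₁ satisfies Λ(η̂) − Λ(η₀) ≤ 3·(1+1/c)·(λ·√s/(n·κ))². -/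

import Mathlib

open Finset

/-- The logistic link function `G(t) = exp t / (1 + exp t)`. -/
noncomputable def logistic (t : ℝ) : ℝ := Real.exp t / (1 + Real.exp t)

/-- Inner product `x_i'η` of the `i`-th design vector with `η`. -/
def xdot {n p : ℕ} (x : Fin n → Fin p → ℝ) (η : Fin p → ℝ) (i : Fin n) : ℝ :=
  ∑ j, x i j * η j

/-- Average logistic negative log-likelihood
`Λ(η) = (1/n)∑ᵢ [log(1+exp(x_i'η)) − y_i·(x_i'η)]`. -/
noncomputable def Lam {n p : ℕ} (x : Fin n → Fin p → ℝ) (y : Fin n → ℝ)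
    (η : Fin p → ℝ) : ℝ :=
  (1 / (n : ℝ)) * ∑ i, (Real.log (1 + Real.exp (xdot x η i)) - y i * xdot x η i)

/-- Gradient of `Λ`: `∇Λ(η) = (1/n)∑ᵢ (G(x_i'η) − y_i)·x_i`. -/
noncomputable def gradLam {n p : ℕ} (x : Fin n → Fin p → ℝ) (y : Fin n → ℝ)
    (η : Fin p → ℝ) (j : Fin p) : ℝ :=
  (1 / (n : ℝ)) * ∑ i, (logistic (xdot x η i) - y i) * x i j

/-- Sup-norm `‖∇Λ(η)‖_∞` of the gradient of `Λ`. -/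
noncomputable def gradLamSup {n p : ℕ} (x : Fin n → Fin p → ℝ) (y : Fin n → ℝ)
    (η : Fin p → ℝ) : ℝ :=
  ⨆ j : Fin p, |gradLam x y η j|

/-- The logistic weights `w_i = G(x_i'η₀)·(1 − G(x_i'η₀))`. -/
noncomputable def wgt {n p : ℕ} (x : Fin n → Fin p → ℝ) (η₀ : Fin p → ℝ) (i : Fin n) : ℝ :=
  logistic (xdot x η₀ i) * (1 - logistic (xdot x η₀ i))

/-- Weighted prediction norm `‖√w_i·x_i'δ‖_{2,n} = ((1/n)∑ᵢ w_i (x_i'δ)²)^{1/2}`. -/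
noncomputable def predNorm {n p : ℕ} (x : Fin n → Fin p → ℝ) (w : Fin n → ℝ)
    (δ : Fin p → ℝ) : ℝ :=
  Real.sqrt ((1 / (n : ℝ)) * ∑ i, w i * xdot x δ i ^ 2)

/-- Support of a coefficient vector. -/
noncomputable def supp {p : ℕ} (η : Fin p → ℝ) : Finset (Fin p) :=
  Finset.univ.filter (fun j => η j ≠ 0)

/-- ℓ1 norm of a vector in `ℝ^p`. -/
def l1norm {p : ℕ} (δ : Fin p → ℝ) : ℝ := ∑ j, |δ j|

/-- The restricted cone `Δ_c̄ = {δ : ‖δ_{T^c}‖₁ ≤ c̄·‖δ_T‖₁}` for a support set `T`. -/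
noncomputable def inCone {p : ℕ} (T : Finset (Fin p)) (cbar : ℝ) (δ : Fin p → ℝ) : Prop :=
  ∑ j ∈ Tᶜ, |δ j| ≤ cbar * ∑ j ∈ T, |δ j|


lemma logistic_pos (t : ℝ) : 0 < logistic t := by
  unfold logistic; positivity

lemma logistic_lt_one (t : ℝ) : logistic t < 1 := by
  rw [logistic, div_lt_one (by positivity)]
  linarith [Real.exp_pos t]

lemma wfac_nonneg (t : ℝ) : 0 ≤ logistic t * (1 - logistic t) :=
  mul_nonneg (logistic_pos t).le (by linarith [logistic_lt_one t])

lemma hasDerivAt_ell (a u : ℝ) :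
    HasDerivAt (fun v => Real.log (1 + Real.exp (a + v))) (logistic (a + u)) u := by
  have h1 : HasDerivAt (fun v : ℝ => a + v) 1 u := (hasDerivAt_id u).const_add a
  have h2 : HasDerivAt (fun v : ℝ => Real.exp (a + v)) (Real.exp (a + u) * 1) u :=
    (Real.hasDerivAt_exp (a + u)).comp u h1
  have h3 : HasDerivAt (fun v : ℝ => 1 + Real.exp (a + v)) (Real.exp (a + u) * 1) u :=
    h2.const_add 1
  have h4 := h3.log (by positivity)
  simpa [logistic] using h4

lemma ge_of_deriv_nonneg {f f' : ℝ → ℝ} (hf : ∀ x, HasDerivAt f (f' x) x)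
    (h' : ∀ x, 0 < x → 0 ≤ f' x) {u : ℝ} (hu : 0 ≤ u) : f 0 ≤ f u := by
  have hdiff : ∀ x, DifferentiableAt ℝ f x := fun x => (hf x).differentiableAt
  have hmono : MonotoneOn f (Set.Ici 0) := by
    apply monotoneOn_of_deriv_nonneg (convex_Ici 0)
      ((Differentiable.continuous hdiff).continuousOn)
      (fun x _ => (hdiff x).differentiableWithinAt)
    intro x hx
    rw [interior_Ici] at hx
    rw [(hf x).deriv]
    exact h' x hx
  exact hmono Set.self_mem_Ici hu hu

lemma ge_of_deriv_nonpos {f f' : ℝ → ℝ} (hf : ∀ x, HasDerivAt f (f' x) x)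
    (h' : ∀ x, x < 0 → f' x ≤ 0) {u : ℝ} (hu : u ≤ 0) : f 0 ≤ f u := by
  have hdiff : ∀ x, DifferentiableAt ℝ f x := fun x => (hf x).differentiableAt
  have hanti : AntitoneOn f (Set.Iic 0) := by
    apply antitoneOn_of_deriv_nonpos (convex_Iic 0)
      ((Differentiable.continuous hdiff).continuousOn)
      (fun x _ => (hdiff x).differentiableWithinAt)
    intro x hx
    rw [interior_Iic] at hx
    rw [(hf x).deriv]
    exact h' x hx
  exact hanti hu Set.self_mem_Iic hu

lemma cubic_ineq {r : ℝ} (hr : 0 ≤ r) : r^2/2 - r^3/6 ≤ Real.exp (-r) + r - 1 := by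
  have hg : ∀ x : ℝ, HasDerivAt (fun v : ℝ => -Real.exp (-v) + 1 - v + v^2/2)
      (Real.exp (-x) - 1 + x) x := by
    intro x
    have h1 : HasDerivAt (fun v : ℝ => -v) (-1) x := (hasDerivAt_id x).neg
    have h2 : HasDerivAt (fun v : ℝ => Real.exp (-v)) (Real.exp (-x) * (-1)) x :=
      (Real.hasDerivAt_exp (-x)).comp x h1
    have h3 : HasDerivAt (fun v : ℝ => v^2/2) x x := by
      have := (hasDerivAt_pow 2 x).div_const 2
      refine this.congr_deriv ?_
      push_cast
      ring
    have h := ((h2.neg.add_const 1).sub (hasDerivAt_id x)).add h3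
    refine h.congr_deriv ?_
    ring
  have hgpos : ∀ x, 0 < x → 0 ≤ -Real.exp (-x) + 1 - x + x^2/2 := by
    intro x hx
    have h0 := ge_of_deriv_nonneg hg
      (fun y _ => by nlinarith [Real.add_one_le_exp (-y)]) hx.le
    norm_num [Real.exp_zero] at h0
    linarith
  have hf : ∀ x : ℝ, HasDerivAt (fun v : ℝ => Real.exp (-v) + v - 1 - v^2/2 + v^3/6)
      (-Real.exp (-x) + 1 - x + x^2/2) x := by
    intro x
    have h1 : HasDerivAt (fun v : ℝ => -v) (-1) x := (hasDerivAt_id x).neg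
    have h2 : HasDerivAt (fun v : ℝ => Real.exp (-v)) (Real.exp (-x) * (-1)) x :=
      (Real.hasDerivAt_exp (-x)).comp x h1
    have h3 : HasDerivAt (fun v : ℝ => v^2/2) x x := by
      have := (hasDerivAt_pow 2 x).div_const 2
      refine this.congr_deriv ?_
      push_cast
      ring
    have h4 : HasDerivAt (fun v : ℝ => v^3/6) (x^2/2) x := by
      have := (hasDerivAt_pow 3 x).div_const 6
      refine this.congr_deriv ?_
      push_cast
      ring
    have h := ((((h2.add (hasDerivAt_id x)).sub_const 1).sub h3).add h4)
    refine h.congr_deriv ?_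
    ring
  have h0 := ge_of_deriv_nonneg hf (fun y hy => hgpos y hy) hr
  norm_num [Real.exp_zero] at h0
  linarith

lemma logistic_deriv_lb (a v : ℝ) (hv : 0 ≤ v) :
    logistic a + logistic a * (1 - logistic a) * (1 - Real.exp (-v)) ≤ logistic (a + v) := by
  have hE : 0 < Real.exp a := Real.exp_pos a
  have hU0 : 0 < Real.exp v := Real.exp_pos v
  have hU : 1 ≤ Real.exp v := Real.one_le_exp hv
  unfold logistic
  rw [Real.exp_add, Real.exp_neg]
  set E := Real.exp a with hEdef
  set U := Real.exp v with hUdef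
  have h1 : (0:ℝ) < 1+E := by positivity
  have h2 : (0:ℝ) < 1+E*U := by positivity
  have key : E*U/(1+E*U) - (E/(1+E) + E/(1+E)*(1 - E/(1+E))*(1 - U⁻¹))
      = E*(U-1)^2/((1+E)^2*(1+E*U)*U) := by
    field_simp
    ring
  have hnn : 0 ≤ E*(U-1)^2/((1+E)^2*(1+E*U)*U) := by positivity
  linarith

lemma logistic_deriv_ub (a v : ℝ) (hv : v ≤ 0) :
    logistic (a + v) ≤ logistic a + logistic a * (1 - logistic a) * (Real.exp v - 1) := by
  have hE : 0 < Real.exp a := Real.exp_pos a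
  have hU0 : 0 < Real.exp v := Real.exp_pos v
  unfold logistic
  rw [Real.exp_add]
  set E := Real.exp a with hEdef
  set U := Real.exp v with hUdef
  have h1 : (0:ℝ) < 1+E := by positivity
  have h2 : (0:ℝ) < 1+E*U := by positivity
  have key : E/(1+E) + E/(1+E)*(1 - E/(1+E))*(U - 1) - E*U/(1+E*U)
      = E^2*(U-1)^2/((1+E)^2*(1+E*U)) := by
    field_simp
    ring
  have hnn : 0 ≤ E^2*(U-1)^2/((1+E)^2*(1+E*U)) := by positivity
  linarith

lemma selfconc (a u : ℝ) :
    logistic a * (1 - logistic a) * (Real.exp (-|u|) + |u| - 1)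
      ≤ Real.log (1 + Real.exp (a + u)) - Real.log (1 + Real.exp a) - logistic a * u := by
  set w := logistic a * (1 - logistic a) with hw
  rcases le_total 0 u with hu | hu
  · rw [abs_of_nonneg hu]
    have hder : ∀ v : ℝ, HasDerivAt
        (fun v => Real.log (1+Real.exp (a+v)) - logistic a * v - w*(Real.exp (-v)+v))
        (logistic (a+v) - logistic a - w*(-Real.exp (-v)+1)) v := by
      intro v
      have h1 := hasDerivAt_ell a v
      have h2 : HasDerivAt (fun v : ℝ => logistic a * v) (logistic a) v := by
        simpa using (hasDerivAt_id v).const_mul (logistic a)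
      have h3 : HasDerivAt (fun v : ℝ => Real.exp (-v)) (Real.exp (-v) * (-1)) v :=
        (Real.hasDerivAt_exp (-v)).comp v ((hasDerivAt_id v).neg)
      have h4 : HasDerivAt (fun v : ℝ => Real.exp (-v) + v) (Real.exp (-v)*(-1) + 1) v :=
        h3.add (hasDerivAt_id v)
      have h5 := (h1.sub h2).sub (h4.const_mul w)
      refine h5.congr_deriv ?_
      ring
    have hdpos : ∀ v, 0 < v → 0 ≤ logistic (a+v) - logistic a - w*(-Real.exp (-v)+1) := by
      intro v hv
      have := logistic_deriv_lb a v hv.le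
      rw [← hw] at this
      linarith
    have h0 := ge_of_deriv_nonneg hder hdpos hu
    norm_num [Real.exp_zero] at h0
    linarith
  · rw [abs_of_nonpos hu]
    have hder : ∀ v : ℝ, HasDerivAt
        (fun v => Real.log (1+Real.exp (a+v)) - logistic a * v - w*(Real.exp v - v))
        (logistic (a+v) - logistic a - w*(Real.exp v - 1)) v := by
      intro v
      have h1 := hasDerivAt_ell a v
      have h2 : HasDerivAt (fun v : ℝ => logistic a * v) (logistic a) v := by
        simpa using (hasDerivAt_id v).const_mul (logistic a)
      have h4 : HasDerivAt (fun v : ℝ => Real.exp v - v) (Real.exp v - 1) v :=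
        (Real.hasDerivAt_exp v).sub (hasDerivAt_id v)
      have h5 := (h1.sub h2).sub (h4.const_mul w)
      exact h5
    have hdneg : ∀ v, v < 0 → logistic (a+v) - logistic a - w*(Real.exp v - 1) ≤ 0 := by
      intro v hv
      have := logistic_deriv_ub a v hv.le
      rw [← hw] at this
      linarith
    have h0 := ge_of_deriv_nonpos hder hdneg hu
    norm_num [Real.exp_zero] at h0
    simp only [neg_neg]
    linarith

lemma grad_le (a u : ℝ) :
    logistic a * u ≤ Real.log (1 + Real.exp (a + u)) - Real.log (1 + Real.exp a) := by
  have h := selfconc a u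
  have hψ : 0 ≤ Real.exp (-|u|) + |u| - 1 := by linarith [Real.add_one_le_exp (-|u|)]
  have hw := wfac_nonneg a
  nlinarith [mul_nonneg hw hψ]

lemma point_lb (a u : ℝ) :
    logistic a * (1 - logistic a) * (u^2/2 - |u|^3/6)
      ≤ Real.log (1 + Real.exp (a + u)) - Real.log (1 + Real.exp a) - logistic a * u := by
  have h := selfconc a u
  have hc := cubic_ineq (abs_nonneg u)
  have hw := wfac_nonneg a
  have : u^2/2 - |u|^3/6 = |u|^2/2 - |u|^3/6 := by rw [sq_abs]
  rw [this]
  nlinarith [mul_le_mul_of_nonneg_left hc hw]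

lemma ell_convex (a u t : ℝ) (h0 : 0 ≤ t) (h1 : t ≤ 1) :
    Real.log (1 + Real.exp (a + t*u))
      ≤ (1-t)*Real.log (1 + Real.exp a) + t*Real.log (1 + Real.exp (a + u)) := by
  have hA := grad_le (a + t*u) (-(t*u))
  have hB := grad_le (a + t*u) ((1-t)*u)
  rw [show a + t*u + -(t*u) = a by ring] at hA
  rw [show a + t*u + (1-t)*u = a + u by ring] at hB
  have hA' := mul_le_mul_of_nonneg_left hA (show (0:ℝ) ≤ 1 - t by linarith)
  have hB' := mul_le_mul_of_nonneg_left hB h0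
  nlinarith [hA', hB']

set_option maxHeartbeats 1600000 in
/-- Excess-loss bound for the ℓ1-penalized logistic regression estimator: under the
penalty-level, restricted-eigenvalue and nonlinear-impact conditions over the cone
`Δ_c̄`, with `q̄ > 3(1+1/c)λ√s/(nκ)`, any global minimizer `η̂` of the ℓ1-penalized
logistic criterion satisfies `Λ(η̂) − Λ(η₀) ≤ 3(1+1/c)(λ√s/(nκ))²`. -/
theorem lasso_logistic_excess_loss {n p : ℕ} (hn : 0 < n) (hp : 0 < p)
    (x : Fin n → Fin p → ℝ) (y : Fin n → ℝ) (hy : ∀ i, y i = 0 ∨ y i = 1)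
    (η₀ : Fin p → ℝ) (hs : 1 ≤ (supp η₀).card)
    (lam c : ℝ) (hlam : 0 < lam) (hc : 1 < c)
    (hpen : c * gradLamSup x y η₀ ≤ lam / (n : ℝ))
    (κ : ℝ) (hκ : 0 < κ)
    (hRE : ∀ δ : Fin p → ℝ, inCone (supp η₀) ((c + 1) / (c - 1)) δ →
      κ * Real.sqrt (∑ j ∈ supp η₀, δ j ^ 2) ≤ predNorm x (wgt x η₀) δ)
    (qbar : ℝ) (hqbar : 0 < qbar)
    (hq : ∀ δ : Fin p → ℝ, inCone (supp η₀) ((c + 1) / (c - 1)) δ →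
      qbar * ((1 / (n : ℝ)) * ∑ i, wgt x η₀ i * |xdot x δ i| ^ 3)
        ≤ ((1 / (n : ℝ)) * ∑ i, wgt x η₀ i * xdot x δ i ^ 2) ^ ((3 : ℝ) / 2))
    (hqlarge : 3 * (1 + 1 / c) * lam * Real.sqrt ((supp η₀).card) / ((n : ℝ) * κ) < qbar)
    (ηhat : Fin p → ℝ)
    (hmin : ∀ η : Fin p → ℝ,
      Lam x y ηhat + (lam / (n : ℝ)) * l1norm ηhat
        ≤ Lam x y η + (lam / (n : ℝ)) * l1norm η) :
    Lam x y ηhat - Lam x y η₀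
      ≤ 3 * (1 + 1 / c) * (lam * Real.sqrt ((supp η₀).card) / ((n : ℝ) * κ)) ^ 2 := by
  classical
  have hN : (0:ℝ) < (n:ℝ) := by exact_mod_cast hn
  have hc0 : (0:ℝ) < c := lt_trans one_pos hc
  set δ : Fin p → ℝ := fun j => ηhat j - η₀ j with hδ
  -- abbreviations
  set ST : ℝ := ∑ j ∈ supp η₀, |δ j| with hSTdef
  set STc : ℝ := ∑ j ∈ (supp η₀)ᶜ, |δ j| with hSTcdef
  have hST0 : 0 ≤ ST := Finset.sum_nonneg fun j _ => abs_nonneg _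
  have hSTc0 : 0 ≤ STc := Finset.sum_nonneg fun j _ => abs_nonneg _
  -- linearity of xdot
  have hxlin : ∀ (t : ℝ) (i : Fin n),
      xdot x (fun j => η₀ j + t * δ j) i = xdot x η₀ i + t * xdot x δ i := by
    intro t i
    unfold xdot
    rw [Finset.mul_sum, ← Finset.sum_add_distrib]
    exact Finset.sum_congr rfl fun j _ => by ring
  have hηhat1 : (fun j => η₀ j + 1 * δ j) = ηhat := by
    funext j; simp [hδ]
  -- Lam difference formula
  have hLam_diff : ∀ t : ℝ, Lam x y (fun j => η₀ j + t * δ j) - Lam x y η₀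
      = (1/(n:ℝ)) * ∑ i, (Real.log (1 + Real.exp (xdot x η₀ i + t * xdot x δ i))
          - Real.log (1 + Real.exp (xdot x η₀ i)) - y i * (t * xdot x δ i)) := by
    intro t
    unfold Lam
    rw [← mul_sub, ← Finset.sum_sub_distrib]
    congr 1
    refine Finset.sum_congr rfl fun i _ => ?_
    rw [hxlin t i]
    ring
  -- gradient sum swap
  have hgradsum : ∀ v : Fin p → ℝ, ∑ j, gradLam x y η₀ j * v j
      = (1/(n:ℝ)) * ∑ i, (logistic (xdot x η₀ i) - y i) * xdot x v i := by
    intro v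
    calc ∑ j, gradLam x y η₀ j * v j
        = ∑ j, ∑ i, (1/(n:ℝ)) * ((logistic (xdot x η₀ i) - y i) * (x i j * v j)) := by
          refine Finset.sum_congr rfl fun j _ => ?_
          unfold gradLam
          rw [mul_assoc, Finset.sum_mul, Finset.mul_sum]
          exact Finset.sum_congr rfl fun i _ => by ring
      _ = ∑ i, ∑ j, (1/(n:ℝ)) * ((logistic (xdot x η₀ i) - y i) * (x i j * v j)) :=
          Finset.sum_comm
      _ = (1/(n:ℝ)) * ∑ i, (logistic (xdot x η₀ i) - y i) * xdot x v i := by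
          rw [Finset.mul_sum]
          refine Finset.sum_congr rfl fun i _ => ?_
          unfold xdot
          rw [Finset.mul_sum, Finset.mul_sum]
  -- sup-norm bound on gradient coordinates
  have hgj : ∀ j, |gradLam x y η₀ j| ≤ gradLamSup x y η₀ := by
    intro j
    unfold gradLamSup
    exact le_ciSup (f := fun j => |gradLam x y η₀ j|)
      (Set.Finite.bddAbove (Set.finite_range _)) j
  have hSle : gradLamSup x y η₀ ≤ lam / (c * (n:ℝ)) := by
    rw [le_div_iff₀ (by positivity)]
    calc gradLamSup x y η₀ * (c * (n:ℝ)) = (c * gradLamSup x y η₀) * (n:ℝ) := by ring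
      _ ≤ (lam / (n:ℝ)) * (n:ℝ) := by
          apply mul_le_mul_of_nonneg_right hpen hN.le
      _ = lam := by field_simp
  have habs : ∀ v : Fin p → ℝ,
      |∑ j, gradLam x y η₀ j * v j| ≤ (lam / (c * (n:ℝ))) * l1norm v := by
    intro v
    calc |∑ j, gradLam x y η₀ j * v j| ≤ ∑ j, |gradLam x y η₀ j * v j| :=
        Finset.abs_sum_le_sum_abs _ _
      _ ≤ ∑ j, (lam / (c * (n:ℝ))) * |v j| := by
          refine Finset.sum_le_sum fun j _ => ?_
          rw [abs_mul]
          exact mul_le_mul_of_nonneg_right ((hgj j).trans hSle) (abs_nonneg _)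
      _ = (lam / (c * (n:ℝ))) * l1norm v := by rw [l1norm, Finset.mul_sum]
  -- l1 norm split
  have hl1split : ∀ v : Fin p → ℝ,
      l1norm v = ∑ j ∈ supp η₀, |v j| + ∑ j ∈ (supp η₀)ᶜ, |v j| :=
    fun v => (Finset.sum_add_sum_compl (supp η₀) _).symm
  have hzeroTc : ∀ j, j ∈ (supp η₀)ᶜ → η₀ j = 0 := by
    intro j hj
    rw [Finset.mem_compl] at hj
    by_contra h
    exact hj (by simp [supp, h])
  -- upper bound from minimality
  have hupper : Lam x y ηhat - Lam x y η₀ ≤ (lam/(n:ℝ)) * (ST - STc) := by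
    have hm := hmin η₀
    have hl1 : l1norm η₀ - l1norm ηhat ≤ ST - STc := by
      rw [hl1split η₀, hl1split ηhat]
      have e1 : ∑ j ∈ (supp η₀)ᶜ, |η₀ j| = 0 :=
        Finset.sum_eq_zero fun j hj => by rw [hzeroTc j hj, abs_zero]
      have e2 : ∑ j ∈ (supp η₀)ᶜ, |ηhat j| = STc := by
        rw [hSTcdef]
        refine Finset.sum_congr rfl fun j hj => ?_
        rw [hδ]
        simp [hzeroTc j hj]
      have e3 : ∑ j ∈ supp η₀, |η₀ j| - ∑ j ∈ supp η₀, |ηhat j| ≤ ST := by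
        rw [hSTdef, ← Finset.sum_sub_distrib]
        refine Finset.sum_le_sum fun j _ => ?_
        rw [hδ]
        have := abs_sub_abs_le_abs_sub (η₀ j) (ηhat j)
        have h2 : |η₀ j - ηhat j| = |ηhat j - η₀ j| := abs_sub_comm _ _
        simp only []
        linarith
      rw [e1, e2]
      linarith
    have := mul_le_mul_of_nonneg_left hl1 (le_of_lt (show (0:ℝ) < lam/(n:ℝ) by positivity))
    linarith
  -- lower bound via convexity (gradient inequality)
  have hlow1 : ∑ j, gradLam x y η₀ j * δ j ≤ Lam x y ηhat - Lam x y η₀ := by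
    rw [hgradsum δ]
    have e := hLam_diff 1
    rw [hηhat1] at e
    rw [e]
    apply mul_le_mul_of_nonneg_left _ (by positivity : (0:ℝ) ≤ 1/(n:ℝ))
    refine Finset.sum_le_sum fun i _ => ?_
    have := grad_le (xdot x η₀ i) (xdot x δ i)
    simp only [one_mul]
    nlinarith [this]
  -- cone property
  have hcone : STc ≤ ((c+1)/(c-1)) * ST := by
    have h2 : -((lam / (c * (n:ℝ))) * (ST + STc)) ≤ (lam/(n:ℝ)) * (ST - STc) := by
      have ha := habs δ
      rw [hl1split δ, ← hSTdef, ← hSTcdef] at ha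
      have := neg_abs_le (∑ j, gradLam x y η₀ j * δ j)
      linarith
    have hK : (0:ℝ) < lam / (c * (n:ℝ)) := by positivity
    have h4 : lam/(n:ℝ) = c * (lam / (c * (n:ℝ))) := by field_simp
    rw [h4] at h2
    have key : (c-1)*STc ≤ (c+1)*ST := by nlinarith [h2, hK]
    rw [div_mul_eq_mul_div, le_div_iff₀ (by linarith : (0:ℝ) < c-1)]
    nlinarith [key]
  have hconeδ : ∀ t : ℝ, 0 ≤ t → inCone (supp η₀) ((c + 1) / (c - 1)) (fun j => t * δ j) := by
    intro t ht
    unfold inCone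
    have e1 : ∑ j ∈ (supp η₀)ᶜ, |t * δ j| = t * STc := by
      rw [hSTcdef, Finset.mul_sum]
      exact Finset.sum_congr rfl fun j _ => by rw [abs_mul, abs_of_nonneg ht]
    have e2 : ∑ j ∈ supp η₀, |t * δ j| = t * ST := by
      rw [hSTdef, Finset.mul_sum]
      exact Finset.sum_congr rfl fun j _ => by rw [abs_mul, abs_of_nonneg ht]
    rw [e1, e2]
    calc t * STc ≤ t * (((c+1)/(c-1)) * ST) := mul_le_mul_of_nonneg_left hcone ht
      _ = ((c+1)/(c-1)) * (t * ST) := by ring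
  have hconeδ1 : inCone (supp η₀) ((c + 1) / (c - 1)) δ := by
    have := hconeδ 1 zero_le_one
    simpa using this
  -- q and r
  set q : ℝ := (1/(n:ℝ)) * ∑ i, wgt x η₀ i * xdot x δ i ^ 2 with hqdef
  have hq0 : 0 ≤ q := by
    rw [hqdef]
    apply mul_nonneg (by positivity)
    exact Finset.sum_nonneg fun i _ => mul_nonneg (wfac_nonneg _) (sq_nonneg _)
  set r : ℝ := Real.sqrt q with hrdef
  have hr0 : 0 ≤ r := Real.sqrt_nonneg _
  have hr2 : r^2 = q := Real.sq_sqrt hq0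
  -- RE condition
  have hREδ : κ * Real.sqrt (∑ j ∈ supp η₀, δ j ^ 2) ≤ r := by
    have := hRE δ hconeδ1
    rwa [predNorm] at this
  -- Cauchy-Schwarz
  have hCS : ST ≤ Real.sqrt ((supp η₀).card) * Real.sqrt (∑ j ∈ supp η₀, δ j ^ 2) := by
    have h := Finset.sum_mul_sq_le_sq_mul_sq (supp η₀) (fun _ => (1:ℝ)) (fun j => |δ j|)
    simp only [one_pow, one_mul, sq_abs, Finset.sum_const, nsmul_eq_mul, mul_one] at h
    have h2 : ST^2 ≤ ((supp η₀).card : ℝ) * ∑ j ∈ supp η₀, δ j ^ 2 := by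
      rw [hSTdef]; exact h
    calc ST = Real.sqrt (ST^2) := (Real.sqrt_sq hST0).symm
      _ ≤ Real.sqrt (((supp η₀).card : ℝ) * ∑ j ∈ supp η₀, δ j ^ 2) :=
          Real.sqrt_le_sqrt h2
      _ = Real.sqrt ((supp η₀).card) * Real.sqrt (∑ j ∈ supp η₀, δ j ^ 2) :=
          Real.sqrt_mul (Nat.cast_nonneg _) _
  have hSTle : ST ≤ Real.sqrt ((supp η₀).card) * r / κ := by
    rw [le_div_iff₀ hκ]
    have h1 : κ * Real.sqrt (∑ j ∈ supp η₀, δ j ^ 2) ≤ r := hREδ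
    have h2 := mul_le_mul_of_nonneg_left hCS hκ.le
    calc ST * κ = κ * ST := by ring
      _ ≤ κ * (Real.sqrt ((supp η₀).card) * Real.sqrt (∑ j ∈ supp η₀, δ j ^ 2)) := h2
      _ = Real.sqrt ((supp η₀).card) * (κ * Real.sqrt (∑ j ∈ supp η₀, δ j ^ 2)) := by ring
      _ ≤ Real.sqrt ((supp η₀).card) * r :=
          mul_le_mul_of_nonneg_left h1 (Real.sqrt_nonneg _)
  -- convexity of Lam
  have hconv : ∀ t : ℝ, 0 ≤ t → t ≤ 1 →
      Lam x y (fun j => η₀ j + t * δ j) - Lam x y η₀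
        ≤ t * (Lam x y ηhat - Lam x y η₀) := by
    intro t ht0 ht1
    rw [hLam_diff t]
    have e := hLam_diff 1
    rw [hηhat1] at e
    rw [e]
    have hsum : ∑ i, (Real.log (1 + Real.exp (xdot x η₀ i + t * xdot x δ i))
          - Real.log (1 + Real.exp (xdot x η₀ i)) - y i * (t * xdot x δ i))
        ≤ ∑ i, t * (Real.log (1 + Real.exp (xdot x η₀ i + 1 * xdot x δ i))
          - Real.log (1 + Real.exp (xdot x η₀ i)) - y i * (1 * xdot x δ i)) := by
      refine Finset.sum_le_sum fun i _ => ?_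
      have hcv := ell_convex (xdot x η₀ i) (xdot x δ i) t ht0 ht1
      simp only [one_mul]
      nlinarith [hcv]
    calc (1/(n:ℝ)) * ∑ i, (Real.log (1 + Real.exp (xdot x η₀ i + t * xdot x δ i))
          - Real.log (1 + Real.exp (xdot x η₀ i)) - y i * (t * xdot x δ i))
        ≤ (1/(n:ℝ)) * ∑ i, t * (Real.log (1 + Real.exp (xdot x η₀ i + 1 * xdot x δ i))
          - Real.log (1 + Real.exp (xdot x η₀ i)) - y i * (1 * xdot x δ i)) :=
          mul_le_mul_of_nonneg_left hsum (by positivity)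
      _ = t * ((1/(n:ℝ)) * ∑ i, (Real.log (1 + Real.exp (xdot x η₀ i + 1 * xdot x δ i))
          - Real.log (1 + Real.exp (xdot x η₀ i)) - y i * (1 * xdot x δ i))) := by
          rw [← Finset.mul_sum]
          ring
  have hcne : c ≠ 0 := ne_of_gt hc0
  have hnne : ((n:ℝ)) ≠ 0 := ne_of_gt hN
  have hκne : κ ≠ 0 := ne_of_gt hκ
  have hs0 : (0:ℝ) < Real.sqrt ((supp η₀).card) := by
    apply Real.sqrt_pos.mpr
    have : (1:ℝ) ≤ ((supp η₀).card : ℝ) := by exact_mod_cast hs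
    linarith
  set B : ℝ := (1+1/c) * (lam * Real.sqrt ((supp η₀).card) / ((n:ℝ)*κ)) with hBdef
  have hb0 : 0 < B := by
    rw [hBdef]
    apply mul_pos (by positivity)
    exact div_pos (mul_pos hlam hs0) (mul_pos hN hκ)
  -- ℓ1-type step inequality
  have hstep1 : (lam/(n:ℝ))*(ST - STc) + (lam/(c*(n:ℝ)))*(ST + STc)
      ≤ (1+1/c)*(lam/(n:ℝ))*ST := by
    have hKle : lam/(c*(n:ℝ)) ≤ lam/(n:ℝ) := by
      rw [div_le_div_iff₀ (by positivity) (by positivity)]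
      nlinarith [mul_pos hlam hN]
    have e : (1+1/c)*(lam/(n:ℝ))*ST - ((lam/(n:ℝ))*(ST - STc) + (lam/(c*(n:ℝ)))*(ST + STc))
        = STc*(lam/(n:ℝ) - lam/(c*(n:ℝ))) := by
      field_simp
      ring
    have hnn : 0 ≤ STc*(lam/(n:ℝ) - lam/(c*(n:ℝ))) :=
      mul_nonneg hSTc0 (sub_nonneg.mpr hKle)
    linarith
  -- the key inequality for each t ∈ [0,1]
  have hKI : ∀ t : ℝ, 0 ≤ t → t ≤ 1 →
      (t*r)^2/2 - (t*r)^3/(6*qbar) ≤ B * (t*r) := by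
    intro t ht0 ht1
    have htr0 : 0 ≤ t*r := mul_nonneg ht0 hr0
    have hxv : ∀ i, xdot x (fun j => t * δ j) i = t * xdot x δ i := by
      intro i
      unfold xdot
      rw [Finset.mul_sum]
      exact Finset.sum_congr rfl fun j _ => by ring
    -- quadratic term
    have hQt : (1/(n:ℝ)) * ∑ i, wgt x η₀ i * (t * xdot x δ i) ^ 2 = (t*r)^2 := by
      have e : ∑ i, wgt x η₀ i * (t * xdot x δ i) ^ 2
          = t^2 * ∑ i, wgt x η₀ i * xdot x δ i ^ 2 := by
        rw [Finset.mul_sum]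
        exact Finset.sum_congr rfl fun i _ => by ring
      rw [e, mul_pow, hr2, hqdef]
      ring
    -- cubic term
    have hCt : (1/(n:ℝ)) * ∑ i, wgt x η₀ i * |t * xdot x δ i| ^ 3 ≤ (t*r)^3 / qbar := by
      have h := hq (fun j => t * δ j) (hconeδ t ht0)
      have e3 : ∑ i, wgt x η₀ i * |xdot x (fun j => t * δ j) i| ^ 3
          = ∑ i, wgt x η₀ i * |t * xdot x δ i| ^ 3 :=
        Finset.sum_congr rfl fun i _ => by rw [hxv i]
      have e2 : ∑ i, wgt x η₀ i * xdot x (fun j => t * δ j) i ^ 2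
          = ∑ i, wgt x η₀ i * (t * xdot x δ i) ^ 2 :=
        Finset.sum_congr rfl fun i _ => by rw [hxv i]
      rw [e3, e2, hQt] at h
      have h32 : (((t*r):ℝ)^2) ^ ((3:ℝ)/2) = (t*r)^3 := by
        rw [← Real.rpow_natCast (t*r) 2, ← Real.rpow_mul htr0]
        norm_num
      rw [h32] at h
      rw [le_div_iff₀ hqbar]
      linarith
    -- lower bound from self-concordance
    have hLlow : (t*r)^2/2 - (t*r)^3/(6*qbar)
        ≤ Lam x y (fun j => η₀ j + t * δ j) - Lam x y η₀
          - ∑ j, gradLam x y η₀ j * (t * δ j) := by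
      rw [hLam_diff t, hgradsum (fun j => t * δ j)]
      have e4 : ∀ i, (logistic (xdot x η₀ i) - y i) * xdot x (fun j => t * δ j) i
          = (logistic (xdot x η₀ i) - y i) * (t * xdot x δ i) :=
        fun i => by rw [hxv i]
      rw [Finset.sum_congr rfl fun i _ => e4 i]
      rw [← mul_sub, ← Finset.sum_sub_distrib]
      have hge : ∑ i, (wgt x η₀ i * (t * xdot x δ i)^2/2 - wgt x η₀ i * |t * xdot x δ i|^3/6)
          ≤ ∑ i, (Real.log (1 + Real.exp (xdot x η₀ i + t * xdot x δ i))
              - Real.log (1 + Real.exp (xdot x η₀ i)) - y i * (t * xdot x δ i)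
              - (logistic (xdot x η₀ i) - y i) * (t * xdot x δ i)) := by
        refine Finset.sum_le_sum fun i _ => ?_
        have hp := point_lb (xdot x η₀ i) (t * xdot x δ i)
        rw [wgt]
        nlinarith [hp]
      have esplit : ∑ i, (wgt x η₀ i * (t * xdot x δ i)^2/2 - wgt x η₀ i * |t * xdot x δ i|^3/6)
          = (∑ i, wgt x η₀ i * (t * xdot x δ i)^2)/2 - (∑ i, wgt x η₀ i * |t * xdot x δ i|^3)/6 := by
        rw [Finset.sum_sub_distrib, Finset.sum_div, Finset.sum_div]
      have hmul := mul_le_mul_of_nonneg_left hge (by positivity : (0:ℝ) ≤ 1/(n:ℝ))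
      rw [esplit] at hmul
      have efin : (1/(n:ℝ)) * ((∑ i, wgt x η₀ i * (t * xdot x δ i)^2)/2
            - (∑ i, wgt x η₀ i * |t * xdot x δ i|^3)/6)
          = ((1/(n:ℝ)) * ∑ i, wgt x η₀ i * (t * xdot x δ i)^2)/2
            - ((1/(n:ℝ)) * ∑ i, wgt x η₀ i * |t * xdot x δ i|^3)/6 := by ring
      rw [efin, hQt] at hmul
      have : (t*r)^2/2 - (t*r)^3/(6*qbar)
          ≤ (t*r)^2/2 - ((1/(n:ℝ)) * ∑ i, wgt x η₀ i * |t * xdot x δ i|^3)/6 := by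
        have := hCt
        have h6 : ((1/(n:ℝ)) * ∑ i, wgt x η₀ i * |t * xdot x δ i|^3)/6 ≤ ((t*r)^3/qbar)/6 := by
          linarith
        have e7 : ((t*r)^3/qbar)/6 = (t*r)^3/(6*qbar) := by
          rw [div_div, mul_comm qbar 6]
        linarith [h6, e7.le, e7.ge]
      linarith [hmul, this]
    -- upper bound pieces
    have hgt : ∑ j, gradLam x y η₀ j * (t * δ j) = t * ∑ j, gradLam x y η₀ j * δ j := by
      rw [Finset.mul_sum]
      exact Finset.sum_congr rfl fun j _ => by ring
    have hA1 : Lam x y (fun j => η₀ j + t * δ j) - Lam x y η₀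
        ≤ t * ((lam/(n:ℝ))*(ST - STc)) :=
      le_trans (hconv t ht0 ht1) (mul_le_mul_of_nonneg_left hupper ht0)
    have hA2 : -(t * (∑ j, gradLam x y η₀ j * δ j)) ≤ t * ((lam/(c*(n:ℝ)))*(ST + STc)) := by
      have h := habs δ
      rw [hl1split δ, ← hSTdef, ← hSTcdef] at h
      have h2 : -(∑ j, gradLam x y η₀ j * δ j) ≤ (lam/(c*(n:ℝ)))*(ST + STc) := by
        have := neg_abs_le (∑ j, gradLam x y η₀ j * δ j)
        linarith
      calc -(t * (∑ j, gradLam x y η₀ j * δ j))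
          = t * (-(∑ j, gradLam x y η₀ j * δ j)) := by ring
        _ ≤ t * ((lam/(c*(n:ℝ)))*(ST + STc)) := mul_le_mul_of_nonneg_left h2 ht0
    have hB1 : t*((lam/(n:ℝ))*(ST - STc)) + t*((lam/(c*(n:ℝ)))*(ST + STc))
        ≤ t*((1+1/c)*(lam/(n:ℝ))*ST) := by
      calc t*((lam/(n:ℝ))*(ST - STc)) + t*((lam/(c*(n:ℝ)))*(ST + STc))
          = t*((lam/(n:ℝ))*(ST - STc) + (lam/(c*(n:ℝ)))*(ST + STc)) := by ring
        _ ≤ t*((1+1/c)*(lam/(n:ℝ))*ST) := mul_le_mul_of_nonneg_left hstep1 ht0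
    have hB2 : t*((1+1/c)*(lam/(n:ℝ))*ST) ≤ B * (t*r) := by
      have h1 : (0:ℝ) ≤ t*((1+1/c)*(lam/(n:ℝ))) := by positivity
      calc t*((1+1/c)*(lam/(n:ℝ))*ST) = (t*((1+1/c)*(lam/(n:ℝ))))*ST := by ring
        _ ≤ (t*((1+1/c)*(lam/(n:ℝ))))*(Real.sqrt ((supp η₀).card) * r / κ) :=
            mul_le_mul_of_nonneg_left hSTle h1
        _ = B * (t*r) := by
            rw [hBdef]
            field_simp
    rw [hgt] at hLlow
    linarith [hLlow, hA1, hA2, hB1, hB2]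
  -- conclude r ≤ 3B
  have hρq : 3*B < qbar := by
    have e : 3*B = 3 * (1 + 1 / c) * lam * Real.sqrt ((supp η₀).card) / ((n:ℝ) * κ) := by
      rw [hBdef]; ring
    rw [e]
    exact hqlarge
  have hrle : r ≤ 3*B := by
    by_contra hcon
    push_neg at hcon
    have hrpos : 0 < r := lt_trans (by positivity) hcon
    have hrne : r ≠ 0 := ne_of_gt hrpos
    have ht0' : 0 ≤ (3*B)/r := by positivity
    have ht1' : (3*B)/r ≤ 1 := (div_le_one hrpos).mpr hcon.le
    have hKI' := hKI ((3*B)/r) ht0' ht1'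
    rw [div_mul_cancel₀ _ hrne] at hKI'
    -- (3B)²/2 − (3B)³/(6 qbar) ≤ 3B²
    have h2 : 3*B^2/2 ≤ (3*B)^3/(6*qbar) := by nlinarith [hKI']
    have h3 : 3*B^2/2 * (6*qbar) ≤ (3*B)^3 := by
      have := mul_le_mul_of_nonneg_right h2 (by positivity : (0:ℝ) ≤ 6*qbar)
      rwa [div_mul_cancel₀ _ (by positivity : (6*qbar) ≠ 0)] at this
    have hqle : qbar ≤ 3*B := by nlinarith [h3, hb0, mul_pos hb0 hb0]
    linarith
  -- final chain
  have hfin1 : Lam x y ηhat - Lam x y η₀ ≤ (lam/(n:ℝ))*ST := by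
    have h : (lam/(n:ℝ))*(ST - STc) ≤ (lam/(n:ℝ))*ST := by
      apply mul_le_mul_of_nonneg_left (by linarith) (by positivity)
    linarith [hupper]
  have hfin2 : (lam/(n:ℝ))*ST ≤ (lam*Real.sqrt ((supp η₀).card)/((n:ℝ)*κ))*r := by
    calc (lam/(n:ℝ))*ST ≤ (lam/(n:ℝ))*(Real.sqrt ((supp η₀).card) * r / κ) :=
        mul_le_mul_of_nonneg_left hSTle (by positivity)
      _ = (lam*Real.sqrt ((supp η₀).card)/((n:ℝ)*κ))*r := by
          field_simp
  have hfin3 : (lam*Real.sqrt ((supp η₀).card)/((n:ℝ)*κ))*r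
      ≤ (lam*Real.sqrt ((supp η₀).card)/((n:ℝ)*κ))*(3*B) := by
    apply mul_le_mul_of_nonneg_left hrle
    positivity
  have efin : (lam*Real.sqrt ((supp η₀).card)/((n:ℝ)*κ))*(3*B)
      = 3 * (1 + 1 / c) * (lam * Real.sqrt ((supp η₀).card) / ((n : ℝ) * κ)) ^ 2 := by
    rw [hBdef]
    ring
  linarith [hfin1, hfin2, hfin3, efin.le, efin.ge]
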